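/- Let K be a field, L a field extension of K of finite degree i, V a K-vector space, and G a subgroup of the group of K-linear automorphisms of V. Each g ∈ G acts L-linearly on the base change L ⊗_K V via the map 1 ⊗ g (LinearMap.baseChange). If there exists a finite set S of c vectors of L ⊗_K V such that the only g ∈ G fixing every element of S is the identity, then there exists a finite set T of at most c·i vectors of V such that the only g ∈ G fixing every element of T is the identity. -/

import Mathlib

open TensorProduct

lemma exists_components {K L V : Type*} [Field K] [Field L] [Algebra K L]
    [AddCommGroup V] [Module K V] {n : ℕ} (b : Module.Basis (Fin n) K L) (x : L ⊗[K] V) :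
    ∃ v : Fin n → V, x = ∑ j, b j ⊗ₜ[K] v j := by
  induction x with
  | zero => exact ⟨0, by simp⟩
  | tmul l w =>
      refine ⟨fun j => b.repr l j • w, ?_⟩
      conv_lhs => rw [← b.sum_repr l]
      rw [sum_tmul]
      refine Finset.sum_congr rfl fun j _ => ?_
      rw [smul_tmul]
  | add x y hx hy =>
      obtain ⟨v, hv⟩ := hx
      obtain ⟨w, hw⟩ := hy
      exact ⟨v + w, by simp [hv, hw, tmul_add, Finset.sum_add_distrib]⟩

/-- If `L/K` is a field extension of finite degree `i`, `V` a `K`-vector space and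
`G` a subgroup of the `K`-linear automorphisms of `V` acting on `L ⊗[K] V` by base change,
then a base of size `c` for `G` on `L ⊗[K] V` yields a base of size at most `c·i` for `G`
on `V`. -/
theorem stmt2 {K L V : Type*} [Field K] [Field L] [Algebra K L] [FiniteDimensional K L]
    [AddCommGroup V] [Module K V]
    (i : ℕ) (hi : Module.finrank K L = i)
    (G : Subgroup (V ≃ₗ[K] V)) (c : ℕ) (S : Finset (L ⊗[K] V)) (hS : S.card = c)
    (hbase : ∀ g ∈ G, (∀ s ∈ S, LinearMap.baseChange L (g : V →ₗ[K] V) s = s) → g = 1) :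
    ∃ T : Finset V, T.card ≤ c * i ∧
      ∀ g ∈ G, (∀ v ∈ T, g v = v) → g = 1 := by
  classical
  subst hi
  set n := Module.finrank K L
  let b : Module.Basis (Fin n) K L := Module.finBasis K L
  choose v hv using fun s : L ⊗[K] V => exists_components b s
  refine ⟨S.biUnion (fun s => Finset.image (v s) Finset.univ), ?_, ?_⟩
  · calc (S.biUnion (fun s => Finset.image (v s) Finset.univ)).card
        ≤ ∑ s ∈ S, (Finset.image (v s) Finset.univ).card := Finset.card_biUnion_le
      _ ≤ ∑ _s ∈ S, n := Finset.sum_le_sum fun s _ =>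
          (Finset.card_image_le).trans (by simp)
      _ = c * n := by simp [hS, mul_comm]
  · intro g hg hfix
    refine hbase g hg fun s hs => ?_
    rw [hv s, map_sum]
    refine Finset.sum_congr rfl fun j _ => ?_
    rw [LinearMap.baseChange_tmul]
    congr 1
    exact hfix _ (Finset.mem_biUnion.2 ⟨s, hs, Finset.mem_image.2 ⟨j, Finset.mem_univ j, rfl⟩⟩)
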